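/- Let r, s be positive integers, let A_1, A_2, …, A_r be nonnegative real s×s matrices, and let A be the (r,s)-block circulant matrix with first block row (A_1, A_2, …, A_r). Then the spectral radius of A equals the spectral radius of the sum A_1 + A_2 + ⋯ + A_r. -/

import Mathlib

/-- The spectral radius of a square real matrix: the maximum (supremum) of the
moduli of its complex eigenvalues. -/
noncomputable def specRad {m : Type*} [Fintype m] [DecidableEq m]
    (M : Matrix m m ℝ) : ℝ :=
  sSup {x : ℝ | ∃ z ∈ spectrum ℂ (M.map (algebraMap ℝ ℂ)), ‖z‖ = x}

/-- The `(r,s)`-block circulant matrix with first block row `A 0, A 1, …, A (r-1)`: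
the block in position `(i, j)` is `A (j - i)` (subtraction mod `r`). -/
def blockCirc (r s : ℕ) (A : Fin r → Matrix (Fin s) (Fin s) ℝ) :
    Matrix (Fin r × Fin s) (Fin r × Fin s) ℝ :=
  Matrix.of fun p q => A (q.1 - p.1) p.2 q.2

open scoped ENNReal

section aux

attribute [local instance] Matrix.linftyOpNormedRing Matrix.linftyOpNormedAlgebra

variable {m : Type*} [Fintype m] [DecidableEq m] [Nonempty m]

noncomputable instance : CompleteSpace (Matrix m m ℂ) :=
  inferInstance

lemma specRad_eq_toReal (M : Matrix m m ℝ) :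
    specRad M = (spectralRadius ℂ (M.map (algebraMap ℝ ℂ))).toReal := by
  obtain ⟨z₀, hz₀, hz⟩ :=
    spectrum.exists_nnnorm_eq_spectralRadius (M.map (algebraMap ℝ ℂ))
  have hub : ∀ z ∈ spectrum ℂ (M.map (algebraMap ℝ ℂ)), ‖z‖ ≤ ‖z₀‖ := by
    intro z hzmem
    have h1 : (‖z‖₊ : ℝ≥0∞) ≤ spectralRadius ℂ (M.map (algebraMap ℝ ℂ)) :=
      le_iSup₂ (f := fun k (_ : k ∈ spectrum ℂ (M.map (algebraMap ℝ ℂ))) => (‖k‖₊ : ℝ≥0∞)) z hzmem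
    rw [← hz] at h1
    have := ENNReal.coe_le_coe.mp h1
    simpa [← coe_nnnorm] using this
  have hmax : IsGreatest {x : ℝ | ∃ z ∈ spectrum ℂ (M.map (algebraMap ℝ ℂ)), ‖z‖ = x}
      (‖z₀‖) := by
    constructor
    · exact ⟨z₀, hz₀, rfl⟩
    · rintro x ⟨z, hzmem, rfl⟩
      exact hub z hzmem
  rw [specRad, hmax.csSup_eq, ← hz]
  simp

end aux

section rows

variable {r s : ℕ} [NeZero r] (A : Fin r → Matrix (Fin s) (Fin s) ℝ)

omit [NeZero r] in
lemma blockCirc_pow_nonneg (hA : ∀ i a b, 0 ≤ A i a b) (n : ℕ) :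
    ∀ p q, 0 ≤ ((blockCirc r s A) ^ n) p q := by
  induction n with
  | zero => intro p q; simp [Matrix.one_apply]; positivity
  | succ n ih =>
    intro p q
    rw [pow_succ, Matrix.mul_apply]
    refine Finset.sum_nonneg fun k _ => mul_nonneg (ih _ _) ?_
    exact hA _ _ _

lemma blockCirc_pow_rowsum (n : ℕ) (i : Fin r) (a b : Fin s) :
    ∑ j : Fin r, ((blockCirc r s A) ^ n) (i, a) (j, b) = ((∑ k, A k) ^ n) a b := by
  induction n generalizing a b with
  | zero =>
    simp only [pow_zero, Matrix.one_apply]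
    by_cases hab : a = b
    · subst hab
      rw [Finset.sum_eq_single i]
      · simp
      · intro j _ hj
        exact Matrix.one_apply_ne (fun h => hj (congrArg Prod.fst h).symm)
      · simp
    · rw [Finset.sum_eq_zero]
      · simp [hab]
      · intro j _
        simp [Prod.ext_iff, hab]
  | succ n ih =>
    simp only [pow_succ, Matrix.mul_apply]
    rw [Finset.sum_comm]
    have : ∀ p : Fin r × Fin s,
        ∑ j : Fin r, ((blockCirc r s A) ^ n) (i, a) p * blockCirc r s A p (j, b)
          = ((blockCirc r s A) ^ n) (i, a) p * ∑ k, A k p.2 b := by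
      intro p
      rw [← Finset.mul_sum]
      congr 1
      show ∑ j : Fin r, A (j - p.1) p.2 b = ∑ k, A k p.2 b
      exact Fintype.sum_equiv (Equiv.subRight p.1) _ _ fun j => rfl
    simp only [this]
    rw [Fintype.sum_prod_type, Finset.sum_comm]
    refine Finset.sum_congr rfl fun c _ => ?_
    show (∑ x : Fin r, (blockCirc r s A ^ n) (i, a) (x, c) * ∑ k : Fin r, A k c b) = _
    rw [← Finset.sum_mul, ih]
    simp [Matrix.sum_apply]

end rows

theorem stmt0 (r s : ℕ) (hr : 0 < r) (hs : 0 < s)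
    (A : Fin r → Matrix (Fin s) (Fin s) ℝ)
    (hA : ∀ i a b, 0 ≤ A i a b) :
    specRad (blockCirc r s A) = specRad (∑ i, A i) := by
  haveI : NeZero r := ⟨hr.ne'⟩
  haveI : NeZero s := ⟨hs.ne'⟩
  letI : NormedRing (Matrix (Fin r × Fin s) (Fin r × Fin s) ℂ) := Matrix.linftyOpNormedRing
  letI : NormedAlgebra ℂ (Matrix (Fin r × Fin s) (Fin r × Fin s) ℂ) :=
    Matrix.linftyOpNormedAlgebra
  letI : NormedRing (Matrix (Fin s) (Fin s) ℂ) := Matrix.linftyOpNormedRing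
  letI : NormedAlgebra ℂ (Matrix (Fin s) (Fin s) ℂ) := Matrix.linftyOpNormedAlgebra
  set C := blockCirc r s A with hC
  set S := ∑ i, A i with hS
  have hSnn : ∀ n a b, 0 ≤ (S ^ n) a b := by
    intro n
    induction n with
    | zero => intro a b; simp [Matrix.one_apply]; positivity
    | succ n ih =>
      intro a b
      rw [pow_succ, Matrix.mul_apply]
      refine Finset.sum_nonneg fun k _ => mul_nonneg (ih _ _) ?_
      simp only [hS, Matrix.sum_apply]
      exact Finset.sum_nonneg fun i _ => hA i _ _
  -- norms of powers agree
  have hnorm : ∀ n : ℕ, ‖(C.map (algebraMap ℝ ℂ)) ^ n‖₊ = ‖(S.map (algebraMap ℝ ℂ)) ^ n‖₊ := by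
    intro n
    have hmapC : (C.map (algebraMap ℝ ℂ)) ^ n = (C ^ n).map (algebraMap ℝ ℂ) := by
      rw [← RingHom.mapMatrix_apply, ← map_pow, RingHom.mapMatrix_apply]
    have hmapS : (S.map (algebraMap ℝ ℂ)) ^ n = (S ^ n).map (algebraMap ℝ ℂ) := by
      rw [← RingHom.mapMatrix_apply, ← map_pow, RingHom.mapMatrix_apply]
    rw [hmapC, hmapS, Matrix.linfty_opNNNorm_def, Matrix.linfty_opNNNorm_def]
    have key : ∀ p : Fin r × Fin s,
        (∑ q : Fin r × Fin s, ‖((C ^ n).map (algebraMap ℝ ℂ)) p q‖₊)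
          = ∑ b : Fin s, ‖((S ^ n).map (algebraMap ℝ ℂ)) p.2 b‖₊ := by
      rintro ⟨i, a⟩
      apply NNReal.coe_injective
      push_cast
      simp only [Matrix.map_apply]
      have : ∀ (x : ℝ), ‖(algebraMap ℝ ℂ) x‖ = ‖x‖ := fun x => Complex.norm_real x
      simp only [this]
      rw [Fintype.sum_prod_type_right]
      calc ∑ b : Fin s, ∑ j : Fin r, ‖(C ^ n) (i, a) (j, b)‖
          = ∑ b : Fin s, ∑ j : Fin r, (C ^ n) (i, a) (j, b) := by
            refine Finset.sum_congr rfl fun b _ => Finset.sum_congr rfl fun j _ => ?_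
            exact Real.norm_of_nonneg (blockCirc_pow_nonneg A hA n _ _)
        _ = ∑ b : Fin s, (S ^ n) a b := by
            refine Finset.sum_congr rfl fun b _ => ?_
            exact blockCirc_pow_rowsum A n i a b
        _ = ∑ b : Fin s, ‖(S ^ n) a b‖ := by
            refine Finset.sum_congr rfl fun b _ => ?_
            exact (Real.norm_of_nonneg (hSnn n a b)).symm
    apply le_antisymm
    · apply Finset.sup_le
      intro p _
      rw [key p]
      exact Finset.le_sup (f := fun i => ∑ j : Fin s, ‖((S ^ n).map (algebraMap ℝ ℂ)) i j‖₊)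
        (Finset.mem_univ p.2)
    · apply Finset.sup_le
      intro a _
      have : (∑ b : Fin s, ‖((S ^ n).map (algebraMap ℝ ℂ)) a b‖₊)
          = ∑ q : Fin r × Fin s, ‖((C ^ n).map (algebraMap ℝ ℂ)) (⟨0, hr⟩, a) q‖₊ :=
        (key (⟨0, hr⟩, a)).symm
      rw [this]
      exact Finset.le_sup
        (f := fun p : Fin r × Fin s => ∑ q : Fin r × Fin s, ‖((C ^ n).map (algebraMap ℝ ℂ)) p q‖₊)
        (Finset.mem_univ (⟨⟨0, hr⟩, a⟩ : Fin r × Fin s))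
  have hgel1 := spectrum.pow_nnnorm_pow_one_div_tendsto_nhds_spectralRadius
    (C.map (algebraMap ℝ ℂ))
  have hgel2 := spectrum.pow_nnnorm_pow_one_div_tendsto_nhds_spectralRadius
    (S.map (algebraMap ℝ ℂ))
  have heq : spectralRadius ℂ (C.map (algebraMap ℝ ℂ))
      = spectralRadius ℂ (S.map (algebraMap ℝ ℂ)) := by
    refine tendsto_nhds_unique ?_ hgel2
    convert hgel1 using 2 with n
    rw [hnorm n]
  rw [specRad_eq_toReal C, specRad_eq_toReal S, heq]
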